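/- For any integer n ≥ 6, the cycle graph C_n has multiset dimension exactly 3. -/

import Mathlib

open SimpleGraph Finset
open scoped Fin.NatCast Fin.IntCast Fin.CommRing

lemma finSubVal {n : ℕ} (u v : Fin n) :
    (v - u).val = if u.val ≤ v.val then v.val - u.val else v.val + n - u.val := by
  have hu := u.isLt; have hv := v.isLt
  rw [Fin.sub_def]
  show (n - u.val + v.val) % n = _
  rcases le_or_gt u.val v.val with h | h
  · rw [show n - u.val + v.val = n + (v.val - u.val) by omega, Nat.add_mod_left,
      Nat.mod_eq_of_lt (by omega), if_pos h]
  · rw [Nat.mod_eq_of_lt (by omega), if_neg (by omega)]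
    omega

section dist
variable {m : ℕ}

lemma cyc_conn : (cycleGraph (m+2)).Connected := cycleGraph_connected

lemma cyc_dist_add (u : Fin (m+2)) (k : ℕ) :
    (cycleGraph (m+2)).dist u (u + (k : Fin (m+2))) ≤ k := by
  induction k with
  | zero => simp
  | succ k ih =>
    have h1 : (cycleGraph (m+2)).Adj (u + (k : Fin (m+2))) (u + ((k+1 : ℕ) : Fin (m+2))) := by
      rw [cycleGraph_adj]
      right
      push_cast
      ring
    have h2 := dist_eq_one_iff_adj.mpr h1
    calc (cycleGraph (m+2)).dist u (u + ((k+1:ℕ) : Fin (m+2)))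
        ≤ (cycleGraph (m+2)).dist u (u + (k : Fin (m+2)))
          + (cycleGraph (m+2)).dist (u + (k : Fin (m+2))) (u + ((k+1:ℕ) : Fin (m+2))) :=
          cyc_conn.dist_triangle
      _ ≤ k + 1 := by omega

lemma cyc_dist_sub (u : Fin (m+2)) (k : ℕ) :
    (cycleGraph (m+2)).dist u (u - (k : Fin (m+2))) ≤ k := by
  induction k with
  | zero => simp
  | succ k ih =>
    have h1 : (cycleGraph (m+2)).Adj (u - (k : Fin (m+2))) (u - ((k+1 : ℕ) : Fin (m+2))) := by
      rw [cycleGraph_adj]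
      left
      push_cast
      ring
    have h2 := dist_eq_one_iff_adj.mpr h1
    calc (cycleGraph (m+2)).dist u (u - ((k+1:ℕ) : Fin (m+2)))
        ≤ (cycleGraph (m+2)).dist u (u - (k : Fin (m+2)))
          + (cycleGraph (m+2)).dist (u - (k : Fin (m+2))) (u - ((k+1:ℕ) : Fin (m+2))) :=
          cyc_conn.dist_triangle
      _ ≤ k + 1 := by omega

lemma walk_drift {u v : Fin (m+2)} (w : (cycleGraph (m+2)).Walk u v) :
    ∃ s : ℤ, s.natAbs ≤ w.length ∧ ((s : Fin (m+2))) = v - u := by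
  induction w with
  | nil => exact ⟨0, by simp⟩
  | @cons a b c hab w ih =>
    obtain ⟨s, hs, hcast⟩ := ih
    rw [cycleGraph_adj] at hab
    rcases hab with h | h
    · refine ⟨s - 1, by simp only [Walk.length_cons]; omega, ?_⟩
      push_cast
      rw [hcast]
      have hba : b - a = -1 := by linear_combination -h
      rw [show c - a = (c - b) + (b - a) by ring, hba]
      ring
    · refine ⟨s + 1, by simp only [Walk.length_cons]; omega, ?_⟩
      push_cast
      rw [hcast]
      rw [show c - a = (c - b) + (b - a) by ring, h]

theorem cyc_dist_eq (u v : Fin (m+2)) :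
    (cycleGraph (m+2)).dist u v = min (v - u).val (u - v).val := by
  have hsv := finSubVal u v
  have hsu := finSubVal v u
  have hu := u.isLt; have hv := v.isLt
  rcases eq_or_ne u v with rfl | hne
  · simp
  have hne' : u.val ≠ v.val := fun h => hne (Fin.ext h)
  have hub : (cycleGraph (m+2)).dist u v ≤ min (v - u).val (u - v).val := by
    refine le_min ?_ ?_
    · have := cyc_dist_add u (v - u).val
      rwa [Fin.cast_val_eq_self, add_sub_cancel] at this
    · have := cyc_dist_sub u (u - v).val
      rwa [Fin.cast_val_eq_self, sub_sub_cancel] at this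
  refine le_antisymm hub ?_
  by_contra hlt
  push_neg at hlt
  obtain ⟨w, hw⟩ := (cyc_conn (m := m)).exists_walk_length_eq_dist u v
  obtain ⟨s, hs, hcast⟩ := walk_drift w
  have hce : (((v - u).val:ℤ) : Fin (m+2)) = v - u := by
    rw [Int.cast_natCast, Fin.cast_val_eq_self]
  have hdvd : ((m+2:ℕ):ℤ) ∣ (s - ((v - u).val:ℤ)) := by
    have h0 : (((s - ((v - u).val:ℤ)) : ℤ) : Fin (m+2)) = 0 := by
      have hsplit : (((s - ((v - u).val:ℤ)) : ℤ) : Fin (m+2))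
          = ((s : ℤ) : Fin (m+2)) - (((v - u).val:ℤ) : Fin (m+2)) := by push_cast; ring
      rw [hsplit, hcast, hce]
      ring
    exact (ZMod.intCast_zmod_eq_zero_iff_dvd _ (m+2)).mp h0
  obtain ⟨k, hk⟩ := hdvd
  have hsum : (v - u).val + (u - v).val = m + 2 := by
    rw [hsv, hsu]
    split_ifs <;> omega
  have hepos : 0 < (v - u).val := by
    rw [hsv]
    split_ifs <;> omega
  have hsabs : s.natAbs < min (v - u).val (u - v).val := by omega
  have hA : (s.natAbs : ℤ) = |s| := Int.natCast_natAbs s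
  have hb1 : s ≤ |s| := le_abs_self s
  have hb2 : -|s| ≤ s := neg_abs_le s
  rcases le_or_gt 0 k with hk0 | hk0
  · have : 0 ≤ ((m+2:ℕ):ℤ) * k := mul_nonneg (by positivity) hk0
    omega
  · have : ((m+2:ℕ):ℤ) * k ≤ ((m+2:ℕ):ℤ) * (-1) := by
      apply mul_le_mul_of_nonneg_left (by omega) (by positivity)
    omega

end dist

lemma cyc_dist_eq' {m : ℕ} (u v : Fin (m+2)) :
    (cycleGraph (m+2)).dist u v =
      min ((u.val - v.val) + (v.val - u.val))
        ((m+2) - ((u.val - v.val) + (v.val - u.val))) := by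
  have hu := u.isLt; have hv := v.isLt
  rw [cyc_dist_eq, finSubVal, finSubVal]
  split_ifs <;> omega


lemma pair_eq {α : Type*} {a b a' b' : α} (h : ({a, b} : Multiset α) = {a', b'}) :
    (a = a' ∧ b = b') ∨ (a = b' ∧ b = a') := by
  rw [show ({a,b} : Multiset α) = a ::ₘ {b} from rfl,
      show ({a',b'} : Multiset α) = a' ::ₘ {b'} from rfl] at h
  rcases Multiset.cons_eq_cons.mp h with ⟨h1, h2⟩ | ⟨hne, cs, h1, h2⟩
  · exact Or.inl ⟨h1, Multiset.singleton_inj.mp h2⟩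
  · have hcs : cs = 0 := by
      have := congrArg Multiset.card h1
      simp at this
      exact this
    subst hcs
    rw [Multiset.cons_zero] at h1 h2
    exact Or.inr ⟨(Multiset.singleton_inj.mp h2).symm, Multiset.singleton_inj.mp h1⟩

lemma triple_eq {α : Type*} {a b c a' b' c' : α}
    (h : ({a, b, c} : Multiset α) = {a', b', c'}) :
    (a=a'∧b=b'∧c=c') ∨ (a=a'∧b=c'∧c=b') ∨ (a=b'∧b=a'∧c=c')
      ∨ (a=b'∧b=c'∧c=a') ∨ (a=c'∧b=a'∧c=b') ∨ (a=c'∧b=b'∧c=a') := by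
  rw [show ({a,b,c} : Multiset α) = a ::ₘ {b, c} from rfl,
      show ({a',b',c'} : Multiset α) = a' ::ₘ {b', c'} from rfl] at h
  rcases Multiset.cons_eq_cons.mp h with ⟨h1, h2⟩ | ⟨hne, cs, h1, h2⟩
  · rcases pair_eq h2 with ⟨e1, e2⟩ | ⟨e1, e2⟩
    · exact Or.inl ⟨h1, e1, e2⟩
    · exact Or.inr (Or.inl ⟨h1, e1, e2⟩)
  · have hcs : ∃ x, cs = {x} := by
      apply Multiset.card_eq_one.mp
      have := congrArg Multiset.card h1
      simp at this
      omega
    obtain ⟨x, rfl⟩ := hcs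
    rw [show (a' ::ₘ {x} : Multiset α) = {a', x} from rfl] at h1
    rw [show (a ::ₘ {x} : Multiset α) = {a, x} from rfl] at h2
    rcases pair_eq h1 with ⟨e1, e2⟩ | ⟨e1, e2⟩ <;>
      rcases pair_eq h2 with ⟨f1, f2⟩ | ⟨f1, f2⟩
    · exact Or.inr (Or.inr (Or.inl ⟨f1.symm, e1, by rw [e2, f2]⟩))
    · exact Or.inr (Or.inr (Or.inr (Or.inr (Or.inl ⟨f2.symm, e1, by rw [e2, f1]⟩))))
    · exact Or.inr (Or.inr (Or.inr (Or.inl ⟨f1.symm, by rw [e1, f2], e2⟩)))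
    · exact Or.inr (Or.inr (Or.inr (Or.inr (Or.inr ⟨f2.symm, by rw [e1, f1], e2⟩))))


lemma dist_char {m : ℕ} (u z : Fin (m+2)) :
    ((cycleGraph (m+2)).dist u z = (u.val - z.val) + (z.val - u.val) ∨
     (cycleGraph (m+2)).dist u z + ((u.val - z.val) + (z.val - u.val)) = m + 2) ∧
    2 * (cycleGraph (m+2)).dist u z ≤ m + 2 := by
  have h := cyc_dist_eq' u z
  have hu := u.isLt; have hz := z.isLt
  omega

/-- B is an m-resolving set: distinct vertices get distinct multisets of distances to B. -/
def mResolving {V : Type*} (G : SimpleGraph V) (B : Finset V) : Prop :=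
  ∀ u v : V, u ≠ v →
    Multiset.map (fun b => G.dist u b) B.val ≠ Multiset.map (fun b => G.dist v b) B.val

/-- The multiset dimension: least cardinality of an m-resolving set, or ∞ if none exists. -/
noncomputable def Mdim {V : Type*} (G : SimpleGraph V) : ℕ∞ :=
  sInf {n : ℕ∞ | ∃ B : Finset V, mResolving G B ∧ (B.card : ℕ∞) = n}

lemma val2 {m : ℕ} : (2 : Fin (m+2)).val = 2 ∨ m = 0 := by
  rcases Nat.eq_zero_or_pos m with h | h
  · right; exact h
  · left
    rw [show (2 : Fin (m+2)) = ((2:ℕ) : Fin (m+2)) by push_cast; ring, Fin.val_natCast]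
    exact Nat.mod_eq_of_lt (by omega)

lemma val3 {m : ℕ} (hm : 4 ≤ m) : (3 : Fin (m+2)).val = 3 := by
  rw [show (3 : Fin (m+2)) = ((3:ℕ) : Fin (m+2)) by push_cast; ring, Fin.val_natCast]
  exact Nat.mod_eq_of_lt (by omega)

set_option maxHeartbeats 4000000 in
lemma mres013 {m : ℕ} (hm : 4 ≤ m) :
    mResolving (cycleGraph (m+2)) ({0,1,3} : Finset (Fin (m+2))) := by
  have e0 : ((0 : Fin (m+2))).val = 0 := rfl
  have e1 : ((1 : Fin (m+2))).val = 1 := Fin.val_one m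
  have e3 := val3 hm
  have h13 : (1 : Fin (m+2)) ≠ 3 := by intro hh; rw [Fin.ext_iff, e1, e3] at hh; omega
  have h01 : (0 : Fin (m+2)) ≠ 1 := by intro hh; rw [Fin.ext_iff, e0, e1] at hh; omega
  have h03 : (0 : Fin (m+2)) ≠ 3 := by intro hh; rw [Fin.ext_iff, e0, e3] at hh; omega
  have hval : ({0,1,3} : Finset (Fin (m+2))).val = 0 ::ₘ 1 ::ₘ 3 ::ₘ 0 := by
    rw [show ({0,1,3} : Finset (Fin (m+2))) = insert 0 (insert 1 {3}) from rfl,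
      Finset.insert_val_of_notMem (by simp [h01, h03]),
      Finset.insert_val_of_notMem (by simp [h13])]
    rfl
  intro u v huv h
  rw [hval] at h
  simp only [Multiset.map_cons, Multiset.map_singleton, Multiset.map_zero,
    Multiset.cons_zero] at h
  have hperm := triple_eq h
  have cu0 := dist_char u 0
  have cu1 := dist_char u 1
  have cu3 := dist_char u 3
  have cv0 := dist_char v 0
  have cv1 := dist_char v 1
  have cv3 := dist_char v 3
  rw [e0] at cu0 cv0
  rw [e1] at cu1 cv1
  rw [e3] at cu3 cv3
  have hu := u.isLt; have hv := v.isLt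
  have hne : u.val ≠ v.val := fun hh => huv (Fin.ext hh)
  omega

theorem mdim_cycle (n : ℕ) (hn : 6 ≤ n) :
    Mdim (SimpleGraph.cycleGraph n) = 3 := by
  obtain ⟨m, rfl⟩ : ∃ m, n = m + 2 := ⟨n - 2, by omega⟩
  have hm : 4 ≤ m := by omega
  have e0 : ((0 : Fin (m+2))).val = 0 := rfl
  have e1 : ((1 : Fin (m+2))).val = 1 := Fin.val_one m
  have e3 := val3 hm
  have h13 : (1 : Fin (m+2)) ≠ 3 := by intro hh; rw [Fin.ext_iff, e1, e3] at hh; omega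
  have h01 : (0 : Fin (m+2)) ≠ 1 := by intro hh; rw [Fin.ext_iff, e0, e1] at hh; omega
  have h03 : (0 : Fin (m+2)) ≠ 3 := by intro hh; rw [Fin.ext_iff, e0, e3] at hh; omega
  have hcard : ({0,1,3} : Finset (Fin (m+2))).card = 3 := by
    rw [show ({0,1,3} : Finset (Fin (m+2))) = insert 0 (insert 1 {3}) from rfl,
      Finset.card_insert_of_notMem (by simp [h01, h03]),
      Finset.card_insert_of_notMem (by simp [h13]), Finset.card_singleton]
  unfold Mdim
  apply le_antisymm
  · apply sInf_le
    exact ⟨{0,1,3}, mres013 hm, by rw [hcard]; rfl⟩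
  · refine le_sInf ?_
    rintro x ⟨B, hB, rfl⟩
    by_contra hx
    push_neg at hx
    have hc : B.card < 3 := by exact_mod_cast hx
    have hcases : B.card = 0 ∨ B.card = 1 ∨ B.card = 2 := by omega
    rcases hcases with h | h | h
    · rw [Finset.card_eq_zero] at h
      subst h
      exact hB 0 1 h01 (by simp)
    · obtain ⟨b, rfl⟩ := Finset.card_eq_one.mp h
      have hne : b + 1 ≠ b - 1 := by
        intro hh
        have h2 : (2 : Fin (m+2)) = 0 := by linear_combination hh
        rcases val2 (m := m) with hv2 | hv2
        · rw [Fin.ext_iff, hv2, e0] at h2; omega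
        · omega
      apply hB (b+1) (b-1) hne
      have hd1 : (cycleGraph (m+2)).dist (b+1) b = 1 :=
        dist_eq_one_iff_adj.mpr (by rw [cycleGraph_adj]; left; ring)
      have hd2 : (cycleGraph (m+2)).dist (b-1) b = 1 :=
        dist_eq_one_iff_adj.mpr (by rw [cycleGraph_adj]; right; ring)
      simp [Finset.singleton_val, Multiset.map_singleton, hd1, hd2]
    · obtain ⟨a, b, hab, rfl⟩ := Finset.card_eq_two.mp h
      apply hB a b hab
      rw [show ({a, b} : Finset (Fin (m+2))) = insert a {b} from rfl,
        Finset.insert_val_of_notMem (by simp [hab]), Finset.singleton_val]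
      simp only [Multiset.map_cons, Multiset.map_singleton]
      rw [SimpleGraph.dist_self, SimpleGraph.dist_self, SimpleGraph.dist_comm]
      exact Multiset.cons_swap _ _ _
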